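/- Let (𝒳, 𝒴) be a pair of classes in an abelian category such that: Ext^{≥1}(𝒳, 𝒴) = 0, 𝒴 is closed under extensions and direct summands, and 𝒳 ∩ 𝒴 is a relative generator in the class 𝒢 of (𝒳,𝒴)-Gorenstein injective objects (every G ∈ 𝒢 fits in 0 → G' → W → G → 0 with W ∈ 𝒳 ∩ 𝒴, G' ∈ 𝒢), and 𝒢 is closed under extensions and direct summands. Then for any short exact sequence 0 → A → B → C → 0 with Ext^1(W, A) = 0 for all W ∈ 𝒳 ∩ 𝒴 and B, C ∈ 𝒢, one has A ∈ 𝒢. -/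

import Mathlib

/-!
STATEMENT 15: Let (𝒳, 𝒴) be classes in an abelian category with
Ext^{≥1}(𝒳, 𝒴) = 0, 𝒴 closed under extensions and direct summands, 𝒳 ∩ 𝒴 a
relative generator in the class 𝒢 of (𝒳,𝒴)-Gorenstein injective objects, and
𝒢 closed under extensions and direct summands.  Then for any short exact
sequence 0 → A → B → C → 0 with Ext^1(W, A) = 0 for all W ∈ 𝒳 ∩ 𝒴 and
B, C ∈ 𝒢, one has A ∈ 𝒢.
-/

open CategoryTheory CategoryTheory.Limits CategoryTheory.Abelian

universe w v u

section StmtAux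

variable {C : Type u} [Category.{v} C] [Abelian C]

/-- Pulling back a short exact sequence along a morphism to its third object
gives a short exact sequence (whose third object is the source of the morphism). -/
theorem stmt15_aux_pullback_shortExact (S : ShortComplex C) (hS : S.ShortExact)
    {Y : C} (q : Y ⟶ S.X₃) :
    (ShortComplex.mk
      (pullback.lift S.f (0 : S.X₁ ⟶ Y) (by simp) : S.X₁ ⟶ pullback S.g q)
      (pullback.snd S.g q) (pullback.lift_snd _ _ _)).ShortExact := by
  haveI := hS.mono_f
  haveI := hS.epi_g
  haveI : Mono (pullback.lift S.f (0 : S.X₁ ⟶ Y) (by simp) : S.X₁ ⟶ pullback S.g q) :=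
    mono_of_mono_fac (pullback.lift_fst S.f (0 : S.X₁ ⟶ Y) (by simp))
  refine ShortComplex.ShortExact.mk' ?_ inferInstance inferInstance
  apply ShortComplex.exact_of_f_is_kernel
  apply KernelFork.IsLimit.ofι'
  intro Z k hk
  refine ⟨hS.exact.lift (k ≫ pullback.fst S.g q) ?_, ?_⟩
  · rw [Category.assoc, pullback.condition, ← Category.assoc, hk, zero_comp]
  · apply pullback.hom_ext
    · rw [Category.assoc, pullback.lift_fst]; exact hS.exact.lift_f (k ≫ pullback.fst S.g q) _
    · rw [Category.assoc, pullback.lift_snd, comp_zero]; exact hk.symm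

/-- A short exact sequence whose `Ext¹`-group `Ext T.X₃ T.X₁ 1` vanishes admits a
section of its second map. -/
theorem stmt15_aux_section [HasExt.{w} C] (T : ShortComplex C) (hT : T.ShortExact)
    (h : Subsingleton (Ext.{w} T.X₃ T.X₁ 1)) : ∃ s : T.X₃ ⟶ T.X₂, s ≫ T.g = 𝟙 T.X₃ := by
  letI := HasDerivedCategory.standard C
  have hext : hT.extClass = 0 := Subsingleton.elim _ _
  have hδ : hT.singleδ = 0 := by
    rw [← hT.extClass_hom, hext, Ext.zero_hom]
  obtain ⟨σ, hσ⟩ := Pretriangulated.Triangle.coyoneda_exact₃ hT.singleTriangle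
    hT.singleTriangle_distinguished (𝟙 _) (by
      exact (Category.id_comp _).trans hδ)
  change (DerivedCategory.singleFunctor C 0).obj T.X₃ ⟶ (DerivedCategory.singleFunctor C 0).obj T.X₂ at σ
  have hσ' : σ ≫ (DerivedCategory.singleFunctor C 0).map T.g =
      𝟙 ((DerivedCategory.singleFunctor C 0).obj T.X₃) := hσ.symm
  let H := DerivedCategory.homologyFunctor C 0
  let ε : DerivedCategory.singleFunctor C 0 ⋙ H ≅ 𝟭 C :=
    Functor.isoWhiskerRight ((SingleFunctors.evaluation _ _ 0).mapIso
        (DerivedCategory.singleFunctorsPostcompQIso C)) H ≪≫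
      Functor.associator _ _ _ ≪≫
      Functor.isoWhiskerLeft (CochainComplex.singleFunctor C 0)
        (DerivedCategory.homologyFunctorFactors C 0) ≪≫
      HomologicalComplex.homologyFunctorSingleIso C (ComplexShape.up ℤ) 0
  refine ⟨ε.inv.app T.X₃ ≫ H.map σ ≫ ε.hom.app T.X₂, ?_⟩
  have nat : H.map ((DerivedCategory.singleFunctor C 0).map T.g) ≫ ε.hom.app T.X₃ =
      ε.hom.app T.X₂ ≫ T.g := ε.hom.naturality T.g
  rw [Category.assoc, Category.assoc, ← nat, ← Category.assoc (H.map σ), ← H.map_comp, hσ']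
  simp

end StmtAux

theorem stmt_15 {C : Type u} [Category.{v} C] [Abelian C] [HasExt.{w} C]
    (𝒳 𝒴 𝒢 : Set C)
    (horth : ∀ X ∈ 𝒳, ∀ Y ∈ 𝒴, ∀ i : ℕ, 1 ≤ i → Subsingleton (Ext X Y i))
    (hYext : ∀ S : ShortComplex C, S.ShortExact → S.X₁ ∈ 𝒴 → S.X₃ ∈ 𝒴 → S.X₂ ∈ 𝒴)
    (hYsumm : ∀ Y ∈ 𝒴, ∀ (M : C) (s : M ⟶ Y) (r : Y ⟶ M), s ≫ r = 𝟙 M → M ∈ 𝒴)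
    (hgen : ∀ G ∈ 𝒢, ∃ (G' W : C) (_ : W ∈ 𝒳 ∩ 𝒴) (_ : G' ∈ 𝒢)
      (f : G' ⟶ W) (g : W ⟶ G) (w : f ≫ g = 0), (ShortComplex.mk f g w).ShortExact)
    (hGext : ∀ S : ShortComplex C, S.ShortExact → S.X₁ ∈ 𝒢 → S.X₃ ∈ 𝒢 → S.X₂ ∈ 𝒢)
    (hGsumm : ∀ G ∈ 𝒢, ∀ (M : C) (s : M ⟶ G) (r : G ⟶ M), s ≫ r = 𝟙 M → M ∈ 𝒢)
    (S : ShortComplex C) (hS : S.ShortExact)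
    (hA : ∀ W ∈ 𝒳 ∩ 𝒴, Subsingleton (Ext W S.X₁ 1))
    (hB : S.X₂ ∈ 𝒢) (hC : S.X₃ ∈ 𝒢) : S.X₁ ∈ 𝒢 := by
  obtain ⟨G', W, hW, hG', f₂, g₂, w₂, hS₂⟩ := hgen S.X₃ hC
  -- the pullback of `S.g` and `g₂` sits in a short exact sequence
  -- `0 → G' → pullback g₂ S.g → S.X₂ → 0`, hence lies in `𝒢`
  have hrow := stmt15_aux_pullback_shortExact (ShortComplex.mk f₂ g₂ w₂) hS₂ S.g
  have hP₂ : pullback g₂ S.g ∈ 𝒢 := hGext _ hrow hG' hB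
  have hP : pullback S.g g₂ ∈ 𝒢 :=
    hGsumm _ hP₂ _ (pullbackSymmetry S.g g₂).hom (pullbackSymmetry S.g g₂).inv
      (Iso.hom_inv_id _)
  -- the column `0 → S.X₁ → pullback S.g g₂ → W → 0` is short exact and splits
  -- since `Ext¹ W S.X₁ = 0`
  have hT := stmt15_aux_pullback_shortExact S hS g₂
  obtain ⟨σ, hσ⟩ := stmt15_aux_section _ hT (hA W hW)
  haveI := hT.mono_f
  let sp := ShortComplex.Splitting.ofExactOfSection _ hT.exact σ hσ hT.mono_f
  exact hGsumm _ hP S.X₁ _ sp.r sp.f_r
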